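/- Let a > 0 and let f : ℝ → ℂ be a Schwartz function. Then for every z ∈ ℂ, [B_{a/2}( f′ − a·x·f )](z) = −a·z·(B_{a/2}f)(z); that is, the Bargmann transform intertwines the generalized real Dirac operator d_x^a = ∂/∂x − a·x with multiplication by −a·z. -/

import Mathlib

open Complex Real SchwartzMap
open MeasureTheory Filter
set_option maxHeartbeats 1000000

/-- The (parametrized) Bargmann transform `B_{a/2}`:
`(B_{a/2}f)(z) = (a/π)^{1/4} ∫_ℝ f(x) e^{axz − (a/2)x² − (a/4)z²} dx`. -/
noncomputable def bargmann (a : ℝ) (f : ℝ → ℂ) (z : ℂ) : ℂ :=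
  ((a / Real.pi) ^ ((1 : ℝ) / 4) : ℝ) *
    ∫ x : ℝ, f x * Complex.exp (a * x * z - (a / 2) * x ^ 2 - (a / 4) * z ^ 2)

/-- [B_{a/2}(f' - a x f)](z) = -a z (B f)(z) for Schwartz f: the Bargmann transform intertwines the generalized real Dirac operator with multiplication by -a z. -/
theorem bargmann_dirac (a : ℝ) (ha : 0 < a) (f : SchwartzMap ℝ ℂ) (z : ℂ) :
    bargmann a (fun x : ℝ => deriv (fun y : ℝ => f y) x - (a : ℂ) * (x : ℂ) * f x) z =
      -(a : ℂ) * z * bargmann a (fun x : ℝ => f x) z := by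
  unfold bargmann
  set g : ℝ → ℂ := fun x : ℝ => Complex.exp ((a:ℂ) * x * z - ((a:ℂ) / 2) * x ^ 2 - ((a:ℂ) / 4) * z ^ 2) with hgdef
  have hgint : Integrable g := by
    have h := integrable_cexp_quadratic (b := (a:ℂ)/2) (by simpa using by positivity : (0:ℝ) < ((a:ℂ)/2).re) ((a:ℂ)*z) (-((a:ℂ)/4) * z^2)
    refine h.congr (Eventually.of_forall fun x => congrArg Complex.exp ?_)
    ring
  have hbdd : ∀ (F : ℝ → ℂ), Continuous F → (∃ C, ∀ x, ‖F x‖ ≤ C) → Integrable fun x => F x * g x :=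
    fun F hF hC => hgint.bdd_mul hF.aestronglyMeasurable (ae_of_all _ hC.choose_spec)
  obtain ⟨Cf, _, hCf⟩ := f.decay 0 0
  have hCf' : ∀ x : ℝ, ‖f x‖ ≤ Cf := fun x => by simpa using hCf x
  obtain ⟨Cx, _, hCx⟩ := f.decay 1 0
  have hCx' : ∀ x : ℝ, ‖(a:ℂ) * x * f x‖ ≤ a * Cx := by
    intro x
    have h := hCx x
    simp only [pow_one, norm_iteratedFDeriv_zero] at h
    calc ‖(a:ℂ) * x * f x‖ = a * (‖x‖ * ‖f x‖) := by
          simp [norm_mul, abs_of_pos ha]; ring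
      _ ≤ a * Cx := by nlinarith [norm_nonneg (f x), norm_nonneg x]
  set df := derivCLM ℝ ℂ f with hdf
  obtain ⟨Cd, _, hCd⟩ := df.decay 0 0
  have hderiv_eq : ∀ x : ℝ, deriv (fun y : ℝ => f y) x = df x := fun x => by simp [hdf]
  have hCd' : ∀ x : ℝ, ‖deriv (fun y : ℝ => f y) x‖ ≤ Cd := fun x => by
    rw [hderiv_eq x]; simpa using hCd x
  have Ifg : Integrable fun x : ℝ => f x * g x :=
    hbdd _ f.continuous ⟨Cf, hCf'⟩
  have Ixfg : Integrable fun x : ℝ => ((a:ℂ) * x * f x) * g x :=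
    hbdd _ (by fun_prop) ⟨a * Cx, hCx'⟩
  have Idfg : Integrable fun x : ℝ => deriv (fun y : ℝ => f y) x * g x := by
    refine hbdd _ ?_ ⟨Cd, hCd'⟩
    exact df.continuous.congr fun x => (hderiv_eq x).symm
  -- derivative of f x * g x
  have hh : ∀ x : ℝ, HasDerivAt (fun y : ℝ => f y * g y)
      (deriv (fun y : ℝ => f y) x * g x + f x * (((a:ℂ)*z - a*x) * g x)) x := by
    intro x
    have h1 : HasDerivAt (fun y : ℝ => ((y:ℂ))) 1 x := (hasDerivAt_id x).ofReal_comp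
    have h2 : HasDerivAt (fun y : ℝ => (a:ℂ) * (y:ℂ) * z) ((a:ℂ) * 1 * z) x :=
      (h1.const_mul ((a:ℂ))).mul_const z
    have h3 : HasDerivAt (fun y : ℝ => ((a:ℂ)/2) * ((y:ℂ) * (y:ℂ)))
        (((a:ℂ)/2) * (1 * (x:ℂ) + (x:ℂ) * 1)) x := (h1.mul h1).const_mul ((a:ℂ)/2)
    have hE : HasDerivAt (fun y : ℝ => (a:ℂ) * y * z - ((a:ℂ)/2) * (y:ℂ)^2 - ((a:ℂ)/4) * z^2)
        ((a:ℂ)*z - a*x) x := by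
      have hfun : (fun y : ℝ => (a:ℂ) * y * z - ((a:ℂ)/2) * (y:ℂ)^2 - ((a:ℂ)/4) * z^2)
          = fun y : ℝ => (a:ℂ) * (y:ℂ) * z - ((a:ℂ)/2) * ((y:ℂ) * (y:ℂ)) - ((a:ℂ)/4) * z^2 := by
        funext y; ring
      rw [hfun]
      have h4 := (h2.sub h3).sub_const (((a:ℂ)/4) * z^2)
      convert h4 using 1
      · rfl
      · rfl
      · ring
    have hg' : HasDerivAt g (((a:ℂ)*z - a*x) * g x) x := by
      simpa [hgdef, mul_comm] using hE.cexp
    exact ((f.differentiableAt).hasDerivAt).mul hg'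
  -- integrability of the derivative
  have hint : Integrable fun x : ℝ =>
      deriv (fun y : ℝ => f y) x * g x + f x * (((a:ℂ)*z - a*x) * g x) := by
    have h := Idfg.add ((Ifg.const_mul ((a:ℂ)*z)).sub Ixfg)
    refine h.congr (Eventually.of_forall fun x => ?_)
    simp only [Pi.add_apply, Pi.sub_apply]
    ring
  -- vanishing at infinity
  have hb0 : Tendsto (fun x : ℝ => f x * g x) atTop (nhds 0) ∧
      Tendsto (fun x : ℝ => f x * g x) atBot (nhds 0) := by
    set D : ℝ := Real.exp (a * z.re ^ 2 - (((a:ℂ)/4) * z^2).re) with hD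
    have hbound : ∀ x : ℝ, ‖f x * g x‖ ≤ Cf * D * Real.exp (-(a/4) * x^2) := by
      intro x
      have hgn : ‖g x‖ = Real.exp (((a:ℂ) * x * z - ((a:ℂ)/2) * x^2 - ((a:ℂ)/4) * z^2).re) := by
        simp [hgdef, Complex.norm_exp]
      have hre : ((a:ℂ) * x * z - ((a:ℂ)/2) * x^2 - ((a:ℂ)/4) * z^2).re
          = a * x * z.re - a/2 * x^2 - (((a:ℂ)/4) * z^2).re := by
        simp [Complex.sub_re, Complex.mul_re, ← Complex.ofReal_pow]
      have hexp : a * x * z.re - a/2 * x^2 - (((a:ℂ)/4) * z^2).re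
          ≤ (a * z.re ^ 2 - (((a:ℂ)/4) * z^2).re) + (-(a/4) * x^2) := by
        nlinarith [sq_nonneg (x/2 - z.re), ha.le]
      calc ‖f x * g x‖ = ‖f x‖ * ‖g x‖ := norm_mul _ _
        _ ≤ Cf * (D * Real.exp (-(a/4) * x^2)) := by
            refine mul_le_mul (hCf' x) ?_ (norm_nonneg _) ((norm_nonneg (f 0)).trans (hCf' 0))
            rw [hgn, hre, hD, ← Real.exp_add]
            exact Real.exp_le_exp.mpr hexp
        _ = Cf * D * Real.exp (-(a/4) * x^2) := by ring
    have hsq_top : Tendsto (fun x : ℝ => x^2) atTop atTop := tendsto_pow_atTop (by norm_num)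
    have hsq_bot : Tendsto (fun x : ℝ => x^2) atBot atTop := by
      have h := (tendsto_pow_atTop (α := ℝ) (n := 2) (by norm_num)).comp tendsto_abs_atBot_atTop
      simpa [Function.comp_def, sq_abs] using h
    have hc : -(a/4) < 0 := by linarith
    have hlim : ∀ (l : Filter ℝ), Tendsto (fun x : ℝ => x^2) l atTop →
        Tendsto (fun x : ℝ => Cf * D * Real.exp (-(a/4) * x^2)) l (nhds 0) := by
      intro l hl
      have h : Tendsto (fun x : ℝ => -(a/4) * x^2) l atBot :=
        (tendsto_const_mul_atBot_of_neg hc).mpr hl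
      simpa using (Real.tendsto_exp_atBot.comp h).const_mul (Cf * D)
    exact ⟨squeeze_zero_norm hbound (hlim _ hsq_top), squeeze_zero_norm hbound (hlim _ hsq_bot)⟩
  -- FTC on both half-lines
  have Itop := integral_Ioi_of_hasDerivAt_of_tendsto' (a := (0:ℝ)) (fun x _ => hh x)
    hint.integrableOn hb0.1
  have Ibot := integral_Iic_of_hasDerivAt_of_tendsto' (a := (0:ℝ)) (fun x _ => hh x)
    hint.integrableOn hb0.2
  have htot : ∫ x : ℝ, (deriv (fun y : ℝ => f y) x * g x + f x * (((a:ℂ)*z - a*x) * g x)) = 0 := by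
    rw [← intervalIntegral.integral_Iic_add_Ioi (b := (0:ℝ)) hint.integrableOn hint.integrableOn, Itop, Ibot]
    ring
  -- assemble
  have e2 : ∫ x : ℝ, (deriv (fun y : ℝ => f y) x * g x + f x * (((a:ℂ)*z - a*x) * g x))
      = (∫ x : ℝ, deriv (fun y : ℝ => f y) x * g x)
        + (((a:ℂ)*z) * (∫ x : ℝ, f x * g x) - ∫ x : ℝ, ((a:ℂ) * x * f x) * g x) := by
    rw [integral_add Idfg (((Ifg.const_mul ((a:ℂ)*z)).sub Ixfg).congr (Eventually.of_forall fun x => by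
      simp only [Pi.sub_apply]; ring))]
    congr 1
    rw [← integral_const_mul, ← integral_sub (Ifg.const_mul _) Ixfg]
    congr 1; funext x; ring
  have e1 : ∫ x : ℝ, (deriv (fun y : ℝ => f y) x - (a:ℂ) * x * f x) * g x
      = (∫ x : ℝ, deriv (fun y : ℝ => f y) x * g x) - ∫ x : ℝ, ((a:ℂ) * x * f x) * g x := by
    rw [← integral_sub Idfg Ixfg]
    congr 1; funext x; ring
  rw [e2] at htot
  rw [e1]
  have key : (∫ x : ℝ, deriv (fun y : ℝ => f y) x * g x) - (∫ x : ℝ, ((a:ℂ) * x * f x) * g x)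
      = -(a:ℂ) * z * ∫ x : ℝ, f x * g x := by linear_combination htot
  rw [key]
  ring
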